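/- Let 0 < γ ≤ σ²δ²/(2η²). Then the function v_{γ,0}(x) = −(γη/(γ+δ)²)·e^{λ_γ x} + (γ/(γ+δ))·(x + η/(γ+δ)) satisfies v_{γ,0}(0) = 0, solves (σ²/2)v''(x) + ηv'(x) − δv(x) + γ(x − v(x)) = 0 for all x > 0, is increasing and concave on (0,∞), satisfies v'_{γ,0}(0) ≤ 1 (with equality exactly when γ = σ²δ²/(2η²)), the ratio v'_{γ,0}/v''_{γ,0} is decreasing on (0,∞), and lim_{x↓0} v'_{γ,0}(x)/v''_{γ,0}(x) = −σ²/(2η). Moreover, if μ ≥ 2η then for every x > 0, sup over u ∈ [0,1] and ξ ∈ [0,x] of { (1/2)σ²u²v''_{γ,0}(x) + (η − (1−u)μ)v'_{γ,0}(x) − δv_{γ,0}(x) + γ(ξ + v_{γ,0}(x−ξ) − v_{γ,0}(x)) } equals 0. -/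

import Mathlib

open Real Filter Set

/-- λ_γ, the negative root of (σ²/2)r² + ηr − (δ+γ) = 0. -/
noncomputable def lamGamma (σ η δ γ : ℝ) : ℝ :=
  (-η - Real.sqrt (η ^ 2 + 2 * σ ^ 2 * (δ + γ))) / σ ^ 2

/-- The candidate value function v_{γ,0}. -/
noncomputable def vGamma0 (σ η δ γ : ℝ) (x : ℝ) : ℝ :=
  -(γ * η / (γ + δ) ^ 2) * Real.exp (lamGamma σ η δ γ * x) +
    (γ / (γ + δ)) * (x + η / (γ + δ))


private lemma aux_PQ2 (σ η δ γ R : ℝ) (hσ : 0 < σ) (hη : 0 < η) (hδ : 0 < δ) (hγ : 0 < γ)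
    (hR2 : R ^ 2 = η ^ 2 + 2 * σ ^ 2 * (δ + γ)) (hγ0' : 2 * η ^ 2 * γ ≤ σ ^ 2 * δ ^ 2) :
    (γ * η * R) ^ 2 ≤ (σ ^ 2 * δ * (γ + δ) - γ * η ^ 2) ^ 2 := by
  have hQ2v : (γ * η * R) ^ 2 = γ ^ 2 * η ^ 2 * η ^ 2 + 2 * σ ^ 2 * (δ + γ) * γ ^ 2 * η ^ 2 := by
    linear_combination γ ^ 2 * η ^ 2 * hR2
  nlinarith [hQ2v, mul_nonneg (by positivity : (0:ℝ) ≤ σ ^ 2 * (γ + δ) ^ 2)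
    (by linarith : (0:ℝ) ≤ σ ^ 2 * δ ^ 2 - 2 * η ^ 2 * γ)]

private lemma aux_QP (P Q : ℝ) (h2 : Q ^ 2 ≤ P ^ 2) (hP : 0 ≤ P) (hQ : 0 ≤ Q) : Q ≤ P := by
  nlinarith

private lemma aux_QeqP (P Q : ℝ) (h2 : Q ^ 2 = P ^ 2) (hP : 0 ≤ P) (hQ : 0 ≤ Q) : Q = P := by
  nlinarith [sq_nonneg (P - Q), sq_nonneg (P + Q)]

set_option maxHeartbeats 2000000 in
theorem vGamma0_properties (σ η δ γ μ : ℝ)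
    (hσ : 0 < σ) (hη : 0 < η) (hδ : 0 < δ) (hμ : 0 < μ)
    (hγ : 0 < γ) (hγ0 : γ ≤ σ ^ 2 * δ ^ 2 / (2 * η ^ 2)) :
    vGamma0 σ η δ γ 0 = 0 ∧
    (∀ x : ℝ, 0 < x →
      σ ^ 2 / 2 * deriv (deriv (vGamma0 σ η δ γ)) x + η * deriv (vGamma0 σ η δ γ) x -
        δ * vGamma0 σ η δ γ x + γ * (x - vGamma0 σ η δ γ x) = 0) ∧
    MonotoneOn (vGamma0 σ η δ γ) (Set.Ioi 0) ∧
    ConcaveOn ℝ (Set.Ioi 0) (vGamma0 σ η δ γ) ∧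
    deriv (vGamma0 σ η δ γ) 0 ≤ 1 ∧
    (deriv (vGamma0 σ η δ γ) 0 = 1 ↔ γ = σ ^ 2 * δ ^ 2 / (2 * η ^ 2)) ∧
    AntitoneOn (fun x =>
      deriv (vGamma0 σ η δ γ) x / deriv (deriv (vGamma0 σ η δ γ)) x) (Set.Ioi 0) ∧
    Tendsto (fun x => deriv (vGamma0 σ η δ γ) x / deriv (deriv (vGamma0 σ η δ γ)) x)
      (nhdsWithin 0 (Set.Ioi 0)) (nhds (-σ ^ 2 / (2 * η))) ∧
    (2 * η ≤ μ → ∀ x : ℝ, 0 < x →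
      sSup ((fun p : ℝ × ℝ =>
          1 / 2 * σ ^ 2 * p.1 ^ 2 * deriv (deriv (vGamma0 σ η δ γ)) x +
            (η - (1 - p.1) * μ) * deriv (vGamma0 σ η δ γ) x -
            δ * vGamma0 σ η δ γ x +
            γ * (p.2 + vGamma0 σ η δ γ (x - p.2) - vGamma0 σ η δ γ x)) ''
        (Set.Icc 0 1 ×ˢ Set.Icc 0 x)) = 0) := by
  set R : ℝ := Real.sqrt (η ^ 2 + 2 * σ ^ 2 * (δ + γ)) with hRdef
  set L : ℝ := lamGamma σ η δ γ with hLdef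
  have hs : (0:ℝ) < γ + δ := by linarith
  have hR2 : R ^ 2 = η ^ 2 + 2 * σ ^ 2 * (δ + γ) := Real.sq_sqrt (by positivity)
  have hR0 : 0 ≤ R := Real.sqrt_nonneg _
  have hRη : η < R := by nlinarith [hR2, mul_pos (mul_pos hσ hσ) (add_pos hδ hγ)]
  have hLval : L = (-η - R) / σ ^ 2 := by rw [hLdef, lamGamma, hRdef]
  have hLneg : L < 0 := by
    rw [hLval]
    apply div_neg_of_neg_of_pos _ (by positivity)
    nlinarith
  have hL0 : L ≠ 0 := hLneg.ne
  have hσL : σ ^ 2 * L = -(η + R) := by rw [hLval]; field_simp; ring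
  have hroot : σ ^ 2 / 2 * L ^ 2 + η * L = δ + γ := by
    rw [hLval]; field_simp; nlinarith [hR2]
  -- abbreviations
  set A : ℝ := γ * η / (γ + δ) ^ 2 with hAdef
  set B : ℝ := γ / (γ + δ) with hBdef
  have hApos : 0 < A := by rw [hAdef]; positivity
  have hBpos : 0 < B := by rw [hBdef]; positivity
  have hveq : vGamma0 σ η δ γ = fun x => -A * Real.exp (L * x) + B * (x + η / (γ + δ)) := by
    funext x; rw [vGamma0, ← hLdef, ← hAdef, ← hBdef]
  have hexp : ∀ x : ℝ, HasDerivAt (fun y => Real.exp (L * y)) (L * Real.exp (L * x)) x := by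
    intro x
    simpa [Function.comp_def, mul_comm] using (Real.hasDerivAt_exp (L * x)).comp x ((hasDerivAt_id x).const_mul L)
  have hv' : ∀ x : ℝ, HasDerivAt (vGamma0 σ η δ γ) (-(A * L) * Real.exp (L * x) + B) x := by
    intro x
    rw [hveq]
    have h1 := ((hexp x).const_mul (-A)).add
      (((hasDerivAt_id x).add_const (η / (γ + δ))).const_mul B)
    exact h1.congr_deriv (by ring)
  have hD1 : deriv (vGamma0 σ η δ γ) = fun x => -(A * L) * Real.exp (L * x) + B :=
    funext fun x => (hv' x).deriv
  have hv'' : ∀ x : ℝ, HasDerivAt (deriv (vGamma0 σ η δ γ)) (-(A * L ^ 2) * Real.exp (L * x)) x := by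
    intro x
    rw [hD1]
    have h1 := ((hexp x).const_mul (-(A * L))).add_const B
    exact h1.congr_deriv (by ring)
  have hD2 : deriv (deriv (vGamma0 σ η δ γ)) = fun x => -(A * L ^ 2) * Real.exp (L * x) :=
    funext fun x => (hv'' x).deriv
  have hALpos : 0 < -(A * L) := by nlinarith
  have hv0 : vGamma0 σ η δ γ 0 = 0 := by
    rw [hveq]; simp; rw [hAdef, hBdef]; field_simp; ring
  have hB1 : B * (γ + δ) = γ := by rw [hBdef]; field_simp
  have hBc : γ * (η / (γ + δ)) = B * η := by rw [hBdef]; field_simp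
  have hODE : ∀ x : ℝ,
      σ ^ 2 / 2 * deriv (deriv (vGamma0 σ η δ γ)) x + η * deriv (vGamma0 σ η δ γ) x -
        δ * vGamma0 σ η δ γ x + γ * (x - vGamma0 σ η δ γ x) = 0 := by
    intro x
    have e0 : vGamma0 σ η δ γ x = -A * Real.exp (L * x) + B * (x + η / (γ + δ)) := by
      simp only [hveq]
    have e1 : deriv (vGamma0 σ η δ γ) x = -(A * L) * Real.exp (L * x) + B := by
      simp only [hD1]
    have e2 : deriv (deriv (vGamma0 σ η δ γ)) x = -(A * L ^ 2) * Real.exp (L * x) := by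
      simp only [hD2]
    rw [e0, e1, e2]
    linear_combination (-(A * Real.exp (L * x))) * hroot + (-x - η / (γ + δ)) * hB1 + hBc
  have hvmono : StrictMono (vGamma0 σ η δ γ) := by
    apply strictMono_of_deriv_pos
    intro x
    simp only [hD1]
    have h := mul_pos hALpos (Real.exp_pos (L * x))
    linarith
  have hvconc : ConcaveOn ℝ (Set.Ioi 0) (vGamma0 σ η δ γ) := by
    apply (strictConcaveOn_of_deriv2_neg (convex_Ioi 0)
      (fun x _ => (hv' x).differentiableAt.continuousAt.continuousWithinAt) ?_).concaveOn
    intro x hx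
    simp only [Function.iterate_succ, Function.iterate_zero, Function.comp_apply, id, hD2]
    have h := mul_pos (mul_pos hApos (mul_pos (neg_pos.mpr hLneg) (neg_pos.mpr hLneg))) (Real.exp_pos (L * x))
    nlinarith [h]
  -- derivative at 0
  have hγ0' : 2 * η ^ 2 * γ ≤ σ ^ 2 * δ ^ 2 := by
    have := (le_div_iff₀ (by positivity : (0:ℝ) < 2 * η ^ 2)).mp hγ0
    linarith
  have hd0 : deriv (vGamma0 σ η δ γ) 0 = -(A * L) + B := by
    simp only [hD1, mul_zero, Real.exp_zero, mul_one]
  have hA2 : A * (γ + δ) ^ 2 = γ * η := by rw [hAdef]; field_simp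
  have hd0v : deriv (vGamma0 σ η δ γ) 0 * (2 * (γ + δ) ^ 2) = γ * σ ^ 2 * L ^ 2 := by
    rw [hd0]
    linear_combination (-(2 * L)) * hA2 + 2 * (γ + δ) * hB1 - 2 * γ * hroot
  have hσ4L2 : σ ^ 4 * L ^ 2 = (η + R) ^ 2 := by
    linear_combination (σ ^ 2 * L - (η + R)) * hσL
  have hPpos : 0 ≤ σ ^ 2 * δ * (γ + δ) - γ * η ^ 2 := by
    nlinarith [mul_pos (mul_pos hσ hσ) (mul_pos hδ hγ)]
  have hQnn : 0 ≤ γ * η * R := by positivity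
  have hPQ2 : (γ * η * R) ^ 2 ≤ (σ ^ 2 * δ * (γ + δ) - γ * η ^ 2) ^ 2 :=
    aux_PQ2 σ η δ γ R hσ hη hδ hγ hR2 hγ0'
  have hQP : γ * η * R ≤ σ ^ 2 * δ * (γ + δ) - γ * η ^ 2 := aux_QP _ _ hPQ2 hPpos hQnn
  have hkeyineq : γ * (η + R) ^ 2 ≤ 2 * σ ^ 2 * (γ + δ) ^ 2 := by nlinarith [hQP, hR2]
  have hL2le : γ * σ ^ 2 * L ^ 2 ≤ 2 * (γ + δ) ^ 2 := by
    nlinarith [hkeyineq, hσ4L2, (by positivity : (0:ℝ) < σ ^ 2)]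
  have hd0eq : deriv (vGamma0 σ η δ γ) 0 = γ * σ ^ 2 * L ^ 2 / (2 * (γ + δ) ^ 2) :=
    eq_div_of_mul_eq (by positivity) hd0v
  have hd0le : deriv (vGamma0 σ η δ γ) 0 ≤ 1 := by
    rw [hd0eq, div_le_one (by positivity)]
    exact hL2le
  have hd0iff : deriv (vGamma0 σ η δ γ) 0 = 1 ↔ γ = σ ^ 2 * δ ^ 2 / (2 * η ^ 2) := by
    constructor
    · intro h
      have s1 : γ * σ ^ 2 * L ^ 2 = 2 * (γ + δ) ^ 2 := by rw [← hd0v, h, one_mul]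
      have s2 : γ * (η + R) ^ 2 = 2 * σ ^ 2 * (γ + δ) ^ 2 := by
        linear_combination σ ^ 2 * s1 - γ * hσ4L2
      have s3 : γ * η * R = σ ^ 2 * δ * (γ + δ) - γ * η ^ 2 := by
        linear_combination (1/2) * s2 - (γ/2) * hR2
      have s4 : σ ^ 2 * (γ + δ) ^ 2 * (σ ^ 2 * δ ^ 2 - 2 * η ^ 2 * γ) = 0 := by
        linear_combination (-(σ ^ 2 * δ * (γ + δ) - γ * η ^ 2 + γ * η * R)) * s3 + γ ^ 2 * η ^ 2 * hR2
      have s5 : σ ^ 2 * δ ^ 2 - 2 * η ^ 2 * γ = 0 := by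
        rcases mul_eq_zero.mp s4 with h' | h'
        · exfalso; have : (0:ℝ) < σ ^ 2 * (γ + δ) ^ 2 := by positivity
          linarith
        · exact h'
      rw [eq_div_iff (by positivity : (2:ℝ) * η ^ 2 ≠ 0)]
      linarith
    · intro h
      have hgeq' : 2 * η ^ 2 * γ = σ ^ 2 * δ ^ 2 := by
        rw [h]; field_simp
      have s0 : (γ * η * R) ^ 2 = (σ ^ 2 * δ * (γ + δ) - γ * η ^ 2) ^ 2 := by
        linear_combination γ ^ 2 * η ^ 2 * hR2 + σ ^ 2 * (γ + δ) ^ 2 * hgeq'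
      have s3 : γ * η * R = σ ^ 2 * δ * (γ + δ) - γ * η ^ 2 := aux_QeqP _ _ s0 hPpos hQnn
      have s2 : γ * (η + R) ^ 2 = 2 * σ ^ 2 * (γ + δ) ^ 2 := by
        linear_combination 2 * s3 + γ * hR2
      have s1 : γ * σ ^ 2 * L ^ 2 = 2 * (γ + δ) ^ 2 := by
        have h9 : σ ^ 2 * (γ * σ ^ 2 * L ^ 2 - 2 * (γ + δ) ^ 2) = 0 := by
          linear_combination γ * hσ4L2 + s2
        rcases mul_eq_zero.mp h9 with h' | h'
        · exfalso; have : (0:ℝ) < σ ^ 2 := by positivity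
          linarith
        · linarith
      have := hd0v
      rw [s1] at this
      exact mul_right_cancel₀ (by positivity) (by linarith [this] : deriv (vGamma0 σ η δ γ) 0 * (2 * (γ + δ) ^ 2) = 1 * (2 * (γ + δ) ^ 2))
  -- ratio formula
  have hA0 : A ≠ 0 := hApos.ne'
  have hratio : ∀ t : ℝ, (-(A * L) * Real.exp (L * t) + B) / (-(A * L ^ 2) * Real.exp (L * t))
      = 1 / L - B / (A * L ^ 2) * Real.exp (-(L * t)) := by
    intro t
    rw [Real.exp_neg]
    have hE := Real.exp_ne_zero (L * t)
    field_simp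
    ring
  have hratio' : ∀ t : ℝ, deriv (vGamma0 σ η δ γ) t / deriv (deriv (vGamma0 σ η δ γ)) t
      = 1 / L - B / (A * L ^ 2) * Real.exp (-(L * t)) := by
    intro t
    rw [congrFun hD2 t, congrFun hD1 t]
    exact hratio t
  have hcoef : 0 < B / (A * L ^ 2) := by positivity
  have hanti : AntitoneOn (fun x =>
      deriv (vGamma0 σ η δ γ) x / deriv (deriv (vGamma0 σ η δ γ)) x) (Set.Ioi 0) := by
    intro a _ b _ hab
    simp only [hratio']
    have h1 : Real.exp (-(L * a)) ≤ Real.exp (-(L * b)) := by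
      apply Real.exp_le_exp.mpr
      nlinarith
    have h2 : B / (A * L ^ 2) * Real.exp (-(L * a)) ≤ B / (A * L ^ 2) * Real.exp (-(L * b)) :=
      mul_le_mul_of_nonneg_left h1 hcoef.le
    linarith
  -- limit
  have hval0 : (1 : ℝ) / L - B / (A * L ^ 2) * Real.exp (-(L * 0)) = -σ ^ 2 / (2 * η) := by
    rw [mul_zero, neg_zero, Real.exp_zero, mul_one, hAdef, hBdef]
    field_simp
    linear_combination 2 * hroot
  have hlim : Tendsto (fun x => deriv (vGamma0 σ η δ γ) x / deriv (deriv (vGamma0 σ η δ γ)) x)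
      (nhdsWithin 0 (Set.Ioi 0)) (nhds (-σ ^ 2 / (2 * η))) := by
    have hc : Continuous (fun t : ℝ => 1 / L - B / (A * L ^ 2) * Real.exp (-(L * t))) := by
      continuity
    have := (hc.tendsto 0).mono_left (nhdsWithin_le_nhds (s := Set.Ioi (0:ℝ)))
    rw [hval0] at this
    convert this using 2
    exact hratio' _
  -- v(y) ≤ y for y ≥ 0
  have hd0le' : -(A * L) + B ≤ 1 := by rw [← hd0]; exact hd0le
  have hAeq : B * (η / (γ + δ)) = A := by rw [hAdef, hBdef]; field_simp
  have hvley : ∀ y : ℝ, 0 ≤ y → vGamma0 σ η δ γ y ≤ y := by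
    intro y hy
    have h1 : A * (L * y + 1) ≤ A * Real.exp (L * y) :=
      mul_le_mul_of_nonneg_left (Real.add_one_le_exp _) hApos.le
    have h2 : (-(A * L) + B) * y ≤ 1 * y := mul_le_mul_of_nonneg_right hd0le' hy
    rw [hveq]
    simp only
    linarith [h1, h2, hAeq]
  -- key inequality σ² v'' + 2η v' ≥ 0
  have hS : σ ^ 2 * L + 2 * η = η - R := by linarith [hσL]
  have hcneg : -(A * L) * (η - R) ≤ 0 := by linarith [mul_pos hALpos (sub_pos.mpr hRη)]
  have h1' : (-(A * L) + B) * (2 * (γ + δ) ^ 2) = γ * σ ^ 2 * L ^ 2 := by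
    rw [← hd0]; exact hd0v
  have hc0 : -(A * L) * (η - R) + 2 * η * B = 0 := by
    have hc0' : (-(A * L) * (η - R) + 2 * η * B) * (γ + δ) ^ 2 = 0 := by
      linear_combination (A * L * (γ + δ) ^ 2) * hS + η * h1' + (-(σ ^ 2 * L ^ 2)) * hA2
    rcases mul_eq_zero.mp hc0' with h' | h'
    · exact h'
    · exact absurd h' (by positivity)
  have hkeyx : ∀ x : ℝ, 0 ≤ x →
      0 ≤ σ ^ 2 * (-(A * L ^ 2) * Real.exp (L * x)) + 2 * η * (-(A * L) * Real.exp (L * x) + B) := by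
    intro x hx
    have hE1 : Real.exp (L * x) ≤ 1 := Real.exp_le_one_iff.mpr (mul_nonpos_of_nonpos_of_nonneg hLneg.le hx)
    have hE0 : (0:ℝ) < Real.exp (L * x) := Real.exp_pos _
    have hexpval : σ ^ 2 * (-(A * L ^ 2) * Real.exp (L * x)) + 2 * η * (-(A * L) * Real.exp (L * x) + B)
        = -(A * L) * (η - R) * Real.exp (L * x) + 2 * η * B := by
      linear_combination (-(A * L) * Real.exp (L * x)) * hS
    rw [hexpval]
    linarith [mul_nonneg (neg_nonneg.mpr hcneg) (by linarith : (0:ℝ) ≤ 1 - Real.exp (L * x)), hc0]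
  -- the sSup claim
  have hsup : 2 * η ≤ μ → ∀ x : ℝ, 0 < x →
      sSup ((fun p : ℝ × ℝ =>
          1 / 2 * σ ^ 2 * p.1 ^ 2 * deriv (deriv (vGamma0 σ η δ γ)) x +
            (η - (1 - p.1) * μ) * deriv (vGamma0 σ η δ γ) x -
            δ * vGamma0 σ η δ γ x +
            γ * (p.2 + vGamma0 σ η δ γ (x - p.2) - vGamma0 σ η δ γ x)) ''
        (Set.Icc 0 1 ×ˢ Set.Icc 0 x)) = 0 := by
    intro hμ2 x hx
    have d1x : deriv (vGamma0 σ η δ γ) x = -(A * L) * Real.exp (L * x) + B := congrFun hD1 x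
    have d2x : deriv (deriv (vGamma0 σ η δ γ)) x = -(A * L ^ 2) * Real.exp (L * x) := congrFun hD2 x
    have hd1pos : 0 < deriv (vGamma0 σ η δ γ) x := by
      rw [d1x]; have := mul_pos hALpos (Real.exp_pos (L * x)); linarith
    have hd2neg : deriv (deriv (vGamma0 σ η δ γ)) x < 0 := by
      rw [d2x]
      have h := mul_pos (mul_pos hApos (mul_pos (neg_pos.mpr hLneg) (neg_pos.mpr hLneg))) (Real.exp_pos (L * x))
      linarith [h]
    have hkx : 0 ≤ σ ^ 2 * deriv (deriv (vGamma0 σ η δ γ)) x + 2 * η * deriv (vGamma0 σ η δ γ) x := by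
      rw [d1x, d2x]; exact hkeyx x hx.le
    have hkμ : 0 ≤ σ ^ 2 * deriv (deriv (vGamma0 σ η δ γ)) x + μ * deriv (vGamma0 σ η δ γ) x := by
      linarith [mul_nonneg (by linarith : (0:ℝ) ≤ μ - 2 * η) hd1pos.le, hkx]
    have hub : ∀ z ∈ ((fun p : ℝ × ℝ =>
          1 / 2 * σ ^ 2 * p.1 ^ 2 * deriv (deriv (vGamma0 σ η δ γ)) x +
            (η - (1 - p.1) * μ) * deriv (vGamma0 σ η δ γ) x -
            δ * vGamma0 σ η δ γ x +
            γ * (p.2 + vGamma0 σ η δ γ (x - p.2) - vGamma0 σ η δ γ x)) ''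
        (Set.Icc 0 1 ×ˢ Set.Icc 0 x)), z ≤ 0 := by
      rintro z ⟨⟨u, ξ⟩, ⟨⟨hu0, hu1⟩, hξ0, hξx⟩, rfl⟩
      simp only
      have step1 : 1 / 2 * σ ^ 2 * u ^ 2 * deriv (deriv (vGamma0 σ η δ γ)) x +
          (η - (1 - u) * μ) * deriv (vGamma0 σ η δ γ) x ≤
          σ ^ 2 / 2 * deriv (deriv (vGamma0 σ η δ γ)) x + η * deriv (vGamma0 σ η δ γ) x := by
        linarith [mul_nonneg (by linarith : (0:ℝ) ≤ 1 - u) hkμ,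
          mul_nonneg (mul_nonneg (sq_nonneg σ) (sq_nonneg (1 - u)))
            (by linarith : (0:ℝ) ≤ -(deriv (deriv (vGamma0 σ η δ γ)) x))]
      have step2 : ξ + vGamma0 σ η δ γ (x - ξ) ≤ x := by
        have := hvley (x - ξ) (by linarith)
        linarith
      have step2' : γ * (ξ + vGamma0 σ η δ γ (x - ξ) - vGamma0 σ η δ γ x) ≤
          γ * (x - vGamma0 σ η δ γ x) := by
        apply mul_le_mul_of_nonneg_left _ hγ.le
        linarith
      have := hODE x
      linarith
    apply le_antisymm
    · exact Real.sSup_le hub le_rfl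
    · apply le_csSup ⟨0, hub⟩
      refine ⟨(1, x), Set.mk_mem_prod ⟨zero_le_one, le_rfl⟩ ⟨hx.le, le_rfl⟩, ?_⟩
      simp only
      rw [show x - x = 0 from sub_self x, hv0]
      have := hODE x
      linarith [this]
  exact ⟨hv0, fun x _ => hODE x, fun a _ b _ hab => hvmono.monotone hab, hvconc,
    hd0le, hd0iff, hanti, hlim, hsup⟩
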